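/- For every integer n ≥ 2, all 0 < γ₂ < γ₁, and every p ∈ (0,1): β_{n,γ₂}(p) < β_{n,γ₁}(p)^{γ₂/γ₁}. Equivalently, the function γ ↦ R_γ(p) := β_{n,γ}(p)^{1/γ}/p is strictly increasing in γ for fixed p ∈ (0,1). -/

import Mathlib

open MeasureTheory Real Finset

/-- `theta n γ p = E[(n/N(p))^{1-γ}]` where `N(p)-1 ~ Bin(n-1,p)`. -/
noncomputable def theta (n : ℕ) (γ p : ℝ) : ℝ :=
  ∑ k ∈ Finset.range n,
    ((n - 1).choose k : ℝ) * p ^ k * (1 - p) ^ (n - 1 - k) *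
      ((n : ℝ) / ((k : ℝ) + 1)) ^ (1 - γ)

/-- `beta n γ p = p * theta n γ p`. -/
noncomputable def beta (n : ℕ) (γ p : ℝ) : ℝ := p * theta n γ p

/-- Optimal tontine payout function. -/
noncomputable def Dopt (n : ℕ) (γ r : ℝ) (p : ℝ → ℝ) (t : ℝ) : ℝ :=
  beta n γ (p t) ^ (1 / γ) /
    ∫ s in Set.Ioi (0 : ℝ), Real.exp (-r * s) * beta n γ (p s) ^ (1 / γ)

/-- Cumulative discounted payout of the optimal tontine. -/
noncomputable def Delta (n : ℕ) (γ r : ℝ) (p : ℝ → ℝ) (t : ℝ) : ℝ :=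
  ∫ s in (0 : ℝ)..t, Real.exp (-r * s) * Dopt n γ r p s

/-- for `0 < γ₂ < γ₁` and `0 < p < 1`, `β_{n,γ₂}(p) < β_{n,γ₁}(p)^{γ₂/γ₁}`;
equivalently `R_γ(p) = β_{n,γ}(p)^{1/γ}/p` is strictly increasing in `γ`. -/
theorem beta_holder_monotone_in_gamma
    (n : ℕ) (hn : 2 ≤ n) (γ₁ γ₂ : ℝ) (hγ₂ : 0 < γ₂) (hγ : γ₂ < γ₁)
    (p : ℝ) (hp : p ∈ Set.Ioo (0 : ℝ) 1) :
    beta n γ₂ p < (beta n γ₁ p) ^ (γ₂ / γ₁) ∧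
    (beta n γ₂ p) ^ (1 / γ₂) / p < (beta n γ₁ p) ^ (1 / γ₁) / p := by
  obtain ⟨hp0, hp1⟩ := hp
  have hγ₁ : 0 < γ₁ := hγ₂.trans hγ
  have hq0 : (0:ℝ) < 1 - p := by linarith
  have hn0 : (0:ℝ) < (n:ℝ) := by exact_mod_cast (by omega : 0 < n)
  set x : ℕ → ℝ := fun k => (n:ℝ)/((k:ℝ)+1) with hxdef
  have hxpos : ∀ k, 0 < x k := fun k => div_pos hn0 (by positivity)
  set a : ℕ → ℝ := fun k =>
    ((n-1).choose k : ℝ) * p ^ k * (1-p) ^ (n-1-k) * p * x k with hadef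
  have hapos : ∀ k ∈ Finset.range n, 0 < a k := by
    intro k hk
    have hk' : k ≤ n - 1 := by have := Finset.mem_range.1 hk; omega
    have hc : 0 < ((n-1).choose k : ℝ) := by
      exact_mod_cast Nat.choose_pos hk'
    have := hxpos k
    positivity
  have hbeta : ∀ γ, beta n γ p = ∑ k ∈ Finset.range n, a k * x k ^ (-γ) := by
    intro γ
    rw [beta, theta, Finset.mul_sum]
    refine Finset.sum_congr rfl fun k _ => ?_
    have h1 : x k ^ ((1:ℝ) - γ) = x k * x k ^ (-γ) := by
      rw [show (1:ℝ) - γ = 1 + (-γ) by ring, Real.rpow_add (hxpos k), Real.rpow_one]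
    simp only [hadef, hxdef] at *
    rw [h1]; ring
  have hbpos : ∀ γ, 0 < beta n γ p := by
    intro γ
    rw [hbeta γ]
    refine Finset.sum_pos (fun k hk => ?_) ⟨0, Finset.mem_range.2 (by omega)⟩
    exact mul_pos (hapos k hk) (Real.rpow_pos_of_pos (hxpos k) _)
  set S : ℝ := ∑ k ∈ Finset.range n, a k with hSdef
  have hS0 : 0 < S :=
    Finset.sum_pos hapos ⟨0, Finset.mem_range.2 (by omega)⟩
  -- S = 1 - (1-p)^n
  have hkey : ∀ k, a k = (n.choose (k+1) : ℝ) * (p ^ (k+1) * (1-p) ^ (n-1-k)) := by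
    intro k
    have hnat : n * (n-1).choose k = n.choose (k+1) * (k+1) := by
      have h := Nat.add_one_mul_choose_eq (n-1) k
      have hs : n - 1 + 1 = n := by omega
      simpa [Nat.succ_eq_add_one, hs] using h
    have hcast : (n:ℝ) * ((n-1).choose k : ℝ) = (n.choose (k+1) : ℝ) * ((k:ℝ)+1) := by
      exact_mod_cast congrArg (Nat.cast (R := ℝ)) hnat
    have hk1 : ((k:ℝ)+1) ≠ 0 := by positivity
    simp only [hadef, hxdef]
    rw [mul_div_assoc', div_eq_iff hk1]
    linear_combination p ^ k * p * (1 - p) ^ (n - 1 - k) * hcast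
  have hSeq : S = 1 - (1-p)^n := by
    have h1 : ∑ k ∈ Finset.range (n+1), p ^ k * (1-p) ^ (n-k) * (n.choose k : ℝ) = 1 := by
      have := add_pow p (1-p) n
      simpa using this.symm
    rw [Finset.sum_range_succ'] at h1
    simp only [pow_zero, Nat.choose_zero_right, Nat.cast_one, one_mul, mul_one,
      Nat.sub_zero] at h1
    have h2 : S = ∑ k ∈ Finset.range n, p ^ (k+1) * (1-p) ^ (n-(k+1)) * (n.choose (k+1) : ℝ) := by
      refine Finset.sum_congr rfl fun k hk => ?_
      rw [hkey k, show n - 1 - k = n - (k+1) by omega]; ring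
    linarith [h1, h2]
  have hS1 : S < 1 := by
    have : 0 < (1-p)^n := pow_pos hq0 n
    rw [hSeq]; linarith
  -- Hölder / Jensen step
  set t : ℝ := γ₂ / γ₁ with htdef
  have ht0 : 0 < t := div_pos hγ₂ hγ₁
  have ht1 : t < 1 := (div_lt_one hγ₁).2 hγ
  have hw : ∀ k ∈ Finset.range n, 0 ≤ a k / S := fun k hk => by
    positivity
  have hw' : ∑ k ∈ Finset.range n, a k / S = 1 := by
    rw [← Finset.sum_div, ← hSdef, div_self hS0.ne']
  have hz : ∀ k ∈ Finset.range n, 0 ≤ x k ^ (-γ₂) := fun k _ =>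
    (Real.rpow_pos_of_pos (hxpos k) _).le
  have hpge : 1 ≤ γ₁ / γ₂ := (one_le_div hγ₂).2 hγ.le
  have key := Real.arith_mean_le_rpow_mean (Finset.range n) (fun k => a k / S)
    (fun k => x k ^ (-γ₂)) hw hw' hz hpge
  have hzp : ∀ k, (x k ^ (-γ₂)) ^ (γ₁/γ₂) = x k ^ (-γ₁) := by
    intro k
    rw [← Real.rpow_mul (hxpos k).le]
    congr 1
    field_simp
  have hdivt : 1 / (γ₁/γ₂) = t := by rw [one_div_div, htdef]
  simp only [hzp, hdivt] at key
  have hsum : ∀ γ, ∑ k ∈ Finset.range n, a k / S * x k ^ (-γ) = beta n γ p / S := by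
    intro γ
    rw [hbeta γ, Finset.sum_div]
    exact Finset.sum_congr rfl fun k _ => by ring
  rw [hsum γ₂, hsum γ₁] at key
  have hb1 := hbpos γ₁
  have first : beta n γ₂ p < (beta n γ₁ p) ^ t := by
    calc beta n γ₂ p = S * (beta n γ₂ p / S) := by field_simp
      _ ≤ S * ((beta n γ₁ p / S) ^ t) := mul_le_mul_of_nonneg_left key hS0.le
      _ = S ^ ((1:ℝ)-t) * (beta n γ₁ p) ^ t := by
          rw [Real.div_rpow hb1.le hS0.le, Real.rpow_sub hS0, Real.rpow_one]; ring
      _ < 1 * (beta n γ₁ p) ^ t := by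
          refine mul_lt_mul_of_pos_right ?_ (Real.rpow_pos_of_pos hb1 _)
          exact Real.rpow_lt_one hS0.le hS1 (by linarith)
      _ = (beta n γ₁ p) ^ t := one_mul _
  refine ⟨first, ?_⟩
  have h3 := Real.rpow_lt_rpow (hbpos γ₂).le first (one_div_pos.2 hγ₂)
  rw [← Real.rpow_mul hb1.le] at h3
  have hte : t * (1/γ₂) = 1/γ₁ := by
    rw [htdef]; field_simp
  rw [hte] at h3
  exact (div_lt_div_iff_of_pos_right hp0).2 h3
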